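/- Let Γ be a countable discrete group with a measurable action on a measure space (X,ν), and let Y ⊆ X be a domain of asymptotic expansion. Then every measurable subset Y' ⊆ Y with ν(Y') > 0 is again a domain of asymptotic expansion. -/

import Mathlib

open MeasureTheory Set Filter Pointwise

/-- The union `S · A = ⋃ s ∈ S, s • A` of the translates of `A` by elements of the
finite set `S ⊆ Γ`. -/
def finSMul {Γ X : Type*} [Group Γ] [MulAction Γ X] (S : Finset Γ) (A : Set X) : Set X :=
  ⋃ s ∈ S, s • A

/-- `S` is a finite symmetric subset of `Γ` containing the identity. -/
def SymmFin {Γ : Type*} [Group Γ] (S : Finset Γ) : Prop :=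
  (1 : Γ) ∈ S ∧ ∀ s ∈ S, s⁻¹ ∈ S

/-- The `S`-boundary `∂_S A = (S·A) \ A`. -/
def finBdry {Γ X : Type*} [Group Γ] [MulAction Γ X] (S : Finset Γ) (A : Set X) : Set X :=
  finSMul S A \ A

/-- `Y` is a domain of `(c,S)`-expansion: `ν((S·A) ∩ Y) > (1+c)·ν(A)` for every
measurable `A ⊆ Y` with `0 < ν(A) ≤ ν(Y)/2`. -/
def ExpandsOn {Γ X : Type*} [Group Γ] [MulAction Γ X] [MeasurableSpace X]
    (ν : MeasureTheory.Measure X) (Y : Set X) (c : ℝ) (S : Finset Γ) : Prop :=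
  ∀ A : Set X, MeasurableSet A → A ⊆ Y → 0 < ν A → ν A ≤ ν Y / 2 →
    (1 + ENNReal.ofReal c) * ν A < ν (finSMul S A ∩ Y)

/-- `Y` is a domain of expansion: `(c,S)`-expansion for some `c > 0` and some finite
symmetric `S ∋ 1`. -/
def ExpDomain (Γ : Type*) {X : Type*} [Group Γ] [MulAction Γ X] [MeasurableSpace X]
    (ν : MeasureTheory.Measure X) (Y : Set X) : Prop :=
  ∃ c : ℝ, 0 < c ∧ ∃ S : Finset Γ, SymmFin S ∧ ExpandsOn ν Y c S

/-- The `(α,c,S)` asymptotic-expansion estimate on `Y`: `ν((S·A) ∩ Y) > (1+c)·ν(A)` for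
every measurable `A ⊆ Y` with `α·ν(Y) ≤ ν(A) ≤ ν(Y)/2`. -/
def AsymExpandsOn {Γ X : Type*} [Group Γ] [MulAction Γ X] [MeasurableSpace X]
    (ν : MeasureTheory.Measure X) (Y : Set X) (α c : ℝ) (S : Finset Γ) : Prop :=
  ∀ A : Set X, MeasurableSet A → A ⊆ Y → ENNReal.ofReal α * ν Y ≤ ν A → ν A ≤ ν Y / 2 →
    (1 + ENNReal.ofReal c) * ν A < ν (finSMul S A ∩ Y)

/-- `Y` is a domain of asymptotic expansion. -/
def AsymExpDomain (Γ : Type*) {X : Type*} [Group Γ] [MulAction Γ X] [MeasurableSpace X]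
    (ν : MeasureTheory.Measure X) (Y : Set X) : Prop :=
  ∀ α : ℝ, 0 < α → α ≤ 1 / 2 →
    ∃ c : ℝ, 0 < c ∧ ∃ S : Finset Γ, SymmFin S ∧ AsymExpandsOn ν Y α c S

/-- The action of `Γ` on the probability space `(X,ν)` is strongly ergodic: every almost
invariant sequence of measurable sets is asymptotically trivial. -/
def StronglyErgodic (Γ : Type*) {X : Type*} [Group Γ] [MulAction Γ X] [MeasurableSpace X]
    (ν : MeasureTheory.Measure X) : Prop :=
  ∀ C : ℕ → Set X, (∀ n, MeasurableSet (C n)) →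
    (∀ γ : Γ, Filter.Tendsto (fun n => ν (symmDiff (C n) (γ • C n))) Filter.atTop (nhds 0)) →
    Filter.Tendsto (fun n => ν (C n) * (1 - ν (C n))) Filter.atTop (nhds 0)

/-- The action of `Γ` on `(X,ν)` is measure-class-preserving. -/
def MeasClassPres (Γ : Type*) {X : Type*} [Group Γ] [MulAction Γ X] [MeasurableSpace X]
    (ν : MeasureTheory.Measure X) : Prop :=
  ∀ (γ : Γ) (A : Set X), MeasurableSet A → (ν (γ • A) = 0 ↔ ν A = 0)

/-- The action of `Γ` on `(X,ν)` is ergodic: every invariant measurable set is null or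
conull. -/
def ErgodicAct (Γ : Type*) {X : Type*} [Group Γ] [MulAction Γ X] [MeasurableSpace X]
    (ν : MeasureTheory.Measure X) : Prop :=
  ∀ A : Set X, MeasurableSet A → (∀ γ : Γ, γ • A = A) → ν A = 0 ∨ ν Aᶜ = 0

/-- `W` admits an exhaustion by measurable subsets satisfying `P`. -/
def ExhaustionBy {X : Type*} [MeasurableSpace X] (ν : MeasureTheory.Measure X)
    (W : Set X) (P : Set X → Prop) : Prop :=
  ∃ Y : ℕ → Set X, Monotone Y ∧ (∀ n, MeasurableSet (Y n)) ∧ (∀ n, Y n ⊆ W) ∧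
    (∀ n, P (Y n)) ∧ ν (W \ ⋃ n, Y n) = 0

lemma mem_finSMul {Γ X : Type*} [Group Γ] [MulAction Γ X] {S : Finset Γ} {A : Set X} {x : X} :
    x ∈ finSMul S A ↔ ∃ s ∈ S, ∃ y ∈ A, s • y = x := by
  simp [finSMul, Set.mem_smul_set]

lemma finSMul_measurable {Γ X : Type*} [Group Γ] [MulAction Γ X] [MeasurableSpace X]
    (hmeas : ∀ γ : Γ, Measurable fun x : X => γ • x)
    (S : Finset Γ) {A : Set X} (hA : MeasurableSet A) : MeasurableSet (finSMul S A) := by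
  refine MeasurableSet.biUnion S.countable_toSet (fun s _ => ?_)
  have h : (s • A : Set X) = (fun x => s⁻¹ • x) ⁻¹' A := by
    ext x; simp [Set.mem_smul_set_iff_inv_smul_mem]
  rw [h]; exact hA.preimage (hmeas s⁻¹)

lemma subset_finSMul {Γ X : Type*} [Group Γ] [MulAction Γ X] {S : Finset Γ}
    (h1 : (1 : Γ) ∈ S) (A : Set X) : A ⊆ finSMul S A := by
  intro x hx
  exact mem_finSMul.mpr ⟨1, h1, x, hx, one_smul _ _⟩

lemma finSMul_mono {Γ X : Type*} [Group Γ] [MulAction Γ X] (S : Finset Γ) {A B : Set X}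
    (h : A ⊆ B) : finSMul S A ⊆ finSMul S B := by
  intro x hx
  obtain ⟨s, hs, y, hy, rfl⟩ := mem_finSMul.mp hx
  exact mem_finSMul.mpr ⟨s, hs, y, h hy, rfl⟩

lemma finSMul_finSMul {Γ X : Type*} [Group Γ] [DecidableEq Γ] [MulAction Γ X] (S T : Finset Γ) (A : Set X) :
    finSMul S (finSMul T A) = finSMul (S * T) A := by
  ext x
  simp only [mem_finSMul, Finset.mem_mul]
  constructor
  · rintro ⟨s, hs, y, hy, rfl⟩
    obtain ⟨t, ht, z, hz, rfl⟩ := hy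
    exact ⟨s * t, ⟨s, hs, t, ht, rfl⟩, z, hz, mul_smul s t z⟩
  · rintro ⟨u, ⟨s, hs, t, ht, rfl⟩, z, hz, rfl⟩
    exact ⟨s, hs, t • z, ⟨t, ht, z, hz, rfl⟩, (mul_smul s t z).symm⟩

lemma symmFin_pow {Γ : Type*} [Group Γ] [DecidableEq Γ] {S : Finset Γ} (hS : SymmFin S) (n : ℕ) :
    SymmFin (S ^ n) := by
  induction n with
  | zero =>
    constructor
    · simp [pow_zero]
    · intro s hs; simp only [pow_zero, Finset.mem_one] at hs ⊢; simp [hs]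
  | succ n ih =>
    constructor
    · rw [pow_succ]; simpa using Finset.mul_mem_mul ih.1 hS.1
    · intro s hs
      rw [pow_succ] at hs
      rw [pow_succ']
      obtain ⟨a, ha, b, hb, rfl⟩ := Finset.mem_mul.mp hs
      rw [mul_inv_rev]
      exact Finset.mul_mem_mul (hS.2 b hb) (ih.2 a ha)

lemma finSMul_diff_inter_subset {Γ X : Type*} [Group Γ] [MulAction Γ X]
    {S : Finset Γ} (hS : ∀ s ∈ S, s⁻¹ ∈ S) (Y B : Set X) :
    finSMul S (Y \ finSMul S B) ∩ Y ⊆ Y \ B := by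
  rintro x ⟨hx1, hxY⟩
  refine ⟨hxY, fun hxB => ?_⟩
  obtain ⟨s, hs, y, hy, rfl⟩ := mem_finSMul.mp hx1
  exact hy.2 (mem_finSMul.mpr ⟨s⁻¹, hS s hs, s • y, hxB, inv_smul_smul s y⟩)

/-- Lemma 3.8: any positive measure subset of a domain of asymptotic
expansion is again a domain of asymptotic expansion. -/
theorem asymExpDomain_subset
    {Γ X : Type*} [Group Γ] [Countable Γ] [MulAction Γ X] [MeasurableSpace X]
    (ν : Measure X)
    (hmeas : ∀ γ : Γ, Measurable fun x : X => γ • x)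
    (Y : Set X) (hYm : MeasurableSet Y) (hY0 : 0 < ν Y) (hYfin : ν Y < ⊤)
    (hdom : AsymExpDomain Γ ν Y)
    (Y' : Set X) (hY'm : MeasurableSet Y') (hY'sub : Y' ⊆ Y) (hY'0 : 0 < ν Y') :
    AsymExpDomain Γ ν Y' := by
  letI : DecidableEq Γ := Classical.decEq Γ
  intro α hα hα2
  have hY'fin : ν Y' < ⊤ := lt_of_le_of_lt (measure_mono hY'sub) hYfin
  set V := (ν Y).toReal with hV
  set b := (ν Y').toReal with hb
  have hVpos : 0 < V := ENNReal.toReal_pos hY0.ne' hYfin.ne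
  have hbpos : 0 < b := ENNReal.toReal_pos hY'0.ne' hY'fin.ne
  have hbV : b ≤ V := ENNReal.toReal_mono hYfin.ne (measure_mono hY'sub)
  set α₀ : ℝ := min (α * (b / V)) (b / (8 * V)) with hα₀
  have hα₀pos : 0 < α₀ := lt_min (by positivity) (by positivity)
  have hα₀le : α₀ ≤ 1 / 2 := by
    refine (min_le_left _ _).trans ?_
    have h1 : b / V ≤ 1 := by rw [div_le_one hVpos]; exact hbV
    nlinarith
  obtain ⟨c, hc, S, hSsym, hexp⟩ := hdom α₀ hα₀pos hα₀le
  have hνY : ν Y = ENNReal.ofReal V := (ENNReal.ofReal_toReal hYfin.ne).symm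
  have hνY' : ν Y' = ENNReal.ofReal b := (ENNReal.ofReal_toReal hY'fin.ne).symm
  have key0 : ENNReal.ofReal α₀ * ν Y ≤ ENNReal.ofReal α * ν Y' := by
    calc ENNReal.ofReal α₀ * ν Y ≤ ENNReal.ofReal (α * (b / V)) * ν Y := by
          gcongr
          exact min_le_left _ _
      _ = ENNReal.ofReal (α * (b / V) * V) := by
          rw [hνY, ← ENNReal.ofReal_mul (by positivity)]
      _ = ENNReal.ofReal α * ν Y' := by
          rw [hνY', ← ENNReal.ofReal_mul hα.le]
          congr 1
          field_simp
  obtain ⟨N, hN⟩ := pow_unbounded_of_one_lt (1 / α₀) (by linarith : (1:ℝ) < 1 + c)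
  have hNα : 1 < (1 + c) ^ N * α₀ := by
    rw [div_lt_iff₀ hα₀pos] at hN; linarith
  have hbig : ν Y < ENNReal.ofReal ((1+c)^N) * (ENNReal.ofReal α₀ * ν Y) := by
    calc ν Y = 1 * ν Y := (one_mul _).symm
      _ < ENNReal.ofReal ((1+c)^N * α₀) * ν Y := by
          refine ENNReal.mul_lt_mul_left hY0.ne' hYfin.ne ?_
          exact ENNReal.one_lt_ofReal.mpr hNα
      _ = _ := by rw [ENNReal.ofReal_mul (by positivity), mul_assoc]
  set M := 2 * N + 1 with hM
  refine ⟨1/4, by norm_num, S ^ M, symmFin_pow hSsym M, ?_⟩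
  intro A hAm hAsub hAlow hAhigh
  have hAfin : ν A < ⊤ := lt_of_le_of_lt (measure_mono (hAsub.trans hY'sub)) hYfin
  set f : Set X → Set X := fun T => finSMul S T ∩ Y with hf
  set B : ℕ → Set X := fun n => f^[n] A with hBdef
  have hB0 : B 0 = A := rfl
  have hBsucc : ∀ n, B (n + 1) = finSMul S (B n) ∩ Y := fun n =>
    Function.iterate_succ_apply' f n A
  have hBm : ∀ n, MeasurableSet (B n) := by
    intro n; induction n with
    | zero => exact hAm
    | succ n ih => rw [hBsucc]; exact (finSMul_measurable hmeas S ih).inter hYm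
  have hBY : ∀ n, B n ⊆ Y := by
    intro n; cases n with
    | zero => exact hAsub.trans hY'sub
    | succ n => rw [hBsucc]; exact Set.inter_subset_right
  have hBmono : Monotone B := by
    apply monotone_nat_of_le_succ
    intro n
    rw [hBsucc]
    exact Set.subset_inter (subset_finSMul hSsym.1 _) (hBY n)
  have hAle : ∀ n, ν A ≤ ν (B n) := fun n => measure_mono (hB0 ▸ hBmono (Nat.zero_le n))
  have hAα₀ : ENNReal.ofReal α₀ * ν Y ≤ ν A := key0.trans hAlow
  have hc1 : ENNReal.ofReal (1 + c) = 1 + ENNReal.ofReal c := by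
    rw [ENNReal.ofReal_add (by norm_num) hc.le, ENNReal.ofReal_one]
  have stepA : ∀ n, ν (B n) ≤ ν Y / 2 → (1 + ENNReal.ofReal c) * ν (B n) < ν (B (n+1)) := by
    intro n hn
    have h := hexp (B n) (hBm n) (hBY n) (hAα₀.trans (hAle n)) hn
    rwa [hBsucc]
  have grow : ∀ k, (∀ j, j ≤ k → ν (B j) ≤ ν Y / 2) →
      ENNReal.ofReal ((1 + c) ^ k) * ν A ≤ ν (B k) := by
    intro k
    induction k with
    | zero => intro _; simpa using hAle 0
    | succ k ih =>
      intro h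
      have h1 := stepA k (h k (Nat.le_succ k))
      have h2 := ih (fun j hj => h j (hj.trans (Nat.le_succ k)))
      calc ENNReal.ofReal ((1 + c) ^ (k+1)) * ν A
          = (1 + ENNReal.ofReal c) * (ENNReal.ofReal ((1+c)^k) * ν A) := by
            rw [pow_succ', ENNReal.ofReal_mul (by linarith), hc1, mul_assoc]
        _ ≤ (1 + ENNReal.ofReal c) * ν (B k) := by gcongr
        _ ≤ ν (B (k+1)) := h1.le
  have hit : ν (Y \ B M) < ENNReal.ofReal α₀ * ν Y := by
    by_contra hcon
    push_neg at hcon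
    have hall : ∀ k, k ≤ M → ENNReal.ofReal α₀ * ν Y ≤ ν (Y \ B k) := fun k hk =>
      hcon.trans (measure_mono (Set.diff_subset_diff_right (hBmono hk)))
    have hk₀ : ∃ k ≤ N, ν Y / 2 < ν (B k) := by
      by_contra h
      push_neg at h
      have h1 := grow N h
      have h2 : ν (B N) ≤ ν Y := measure_mono (hBY N)
      have h3 : ENNReal.ofReal ((1+c)^N) * (ENNReal.ofReal α₀ * ν Y) ≤ ν (B N) :=
        le_trans (by gcongr) h1
      exact absurd (hbig.trans_le (h3.trans h2)) (lt_irrefl _)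
    obtain ⟨k₀, hk₀N, hk₀half⟩ := hk₀
    have stepB : ∀ n, n + 1 ≤ M → ν Y / 2 < ν (B n) →
        (1 + ENNReal.ofReal c) * ν (Y \ B (n+1)) < ν (Y \ B n) := by
      intro n hnM hhalf
      set C := Y \ finSMul S (B n) with hC
      have hCeq : Y \ B (n+1) = C := by
        rw [hBsucc]; exact Set.diff_inter_self_eq_diff
      have hCm : MeasurableSet C := hYm.diff (finSMul_measurable hmeas S (hBm n))
      have hClow : ENNReal.ofReal α₀ * ν Y ≤ ν C := hCeq ▸ hall (n+1) hnM
      have hsub : C ⊆ Y \ B n :=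
        Set.diff_subset_diff_right (subset_finSMul hSsym.1 _)
      have hChigh : ν C ≤ ν Y / 2 := by
        by_contra hcon2
        push_neg at hcon2
        have hlt : ν Y < ν Y := by
          calc ν Y = ν Y / 2 + ν Y / 2 := (ENNReal.add_halves _).symm
            _ < ν (B n) + ν C := ENNReal.add_lt_add hhalf hcon2
            _ ≤ ν (B n) + ν (Y \ B n) := add_le_add_right (measure_mono hsub) _
            _ = ν (B n ∪ (Y \ B n)) :=
                (measure_union Set.disjoint_sdiff_right ((hYm.diff (hBm n)))).symm
            _ ≤ ν Y := measure_mono (Set.union_subset (hBY n) Set.diff_subset)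
        exact absurd hlt (lt_irrefl _)
      have hdisj : finSMul S C ∩ Y ⊆ Y \ B n := finSMul_diff_inter_subset hSsym.2 Y (B n)
      have h := hexp C hCm Set.diff_subset hClow hChigh
      rw [hCeq]
      exact h.trans_le (measure_mono hdisj)
    have shrink : ∀ j, j ≤ N →
        ENNReal.ofReal ((1+c)^j) * ν (Y \ B (k₀ + j)) ≤ ν (Y \ B k₀) := by
      intro j
      induction j with
      | zero => intro _; simp
      | succ j ih =>
        intro hj
        have hm : k₀ + j + 1 ≤ M := by omega
        have hhalf : ν Y / 2 < ν (B (k₀ + j)) :=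
          hk₀half.trans_le (measure_mono (hBmono (Nat.le_add_right _ _)))
        have h1 := stepB (k₀ + j) hm hhalf
        calc ENNReal.ofReal ((1+c)^(j+1)) * ν (Y \ B (k₀ + (j+1)))
            = ENNReal.ofReal ((1+c)^j) * ((1 + ENNReal.ofReal c) * ν (Y \ B (k₀ + j + 1))) := by
              rw [pow_succ, ENNReal.ofReal_mul (by positivity), hc1, mul_assoc, Nat.add_assoc]
          _ ≤ ENNReal.ofReal ((1+c)^j) * ν (Y \ B (k₀ + j)) := mul_le_mul_right h1.le _
          _ ≤ ν (Y \ B k₀) := ih (by omega)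
    have h4 := shrink N le_rfl
    have h5 : ENNReal.ofReal α₀ * ν Y ≤ ν (Y \ B (k₀ + N)) := hall (k₀ + N) (by omega)
    have h6 : ν (Y \ B k₀) ≤ ν Y := measure_mono Set.diff_subset
    have h7 : ENNReal.ofReal ((1+c)^N) * (ENNReal.ofReal α₀ * ν Y) ≤ ν (Y \ B k₀) :=
      le_trans (by gcongr) h4
    exact absurd (hbig.trans_le (h7.trans h6)) (lt_irrefl _)
  -- conclusion
  have hBpow : ∀ n, B n ⊆ finSMul (S ^ n) A := by
    intro n; induction n with
    | zero => rw [hB0]; exact subset_finSMul (symmFin_pow hSsym 0).1 A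
    | succ n ih =>
      rw [hBsucc]
      refine Set.inter_subset_left.trans ?_
      calc finSMul S (B n) ⊆ finSMul S (finSMul (S^n) A) := finSMul_mono _ ih
        _ = finSMul (S * S^n) A := finSMul_finSMul _ _ _
        _ = finSMul (S^(n+1)) A := by rw [← pow_succ']
  have hRfin : ν (finSMul (S^M) A ∩ Y') ≤ ν Y' := measure_mono Set.inter_subset_right
  have hdiffR : (ν (Y \ B M)).toReal < α₀ * V := by
    have h1 : (ν (Y \ B M)).toReal < (ENNReal.ofReal α₀ * ν Y).toReal := by
      refine ENNReal.toReal_strict_mono ?_ hit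
      exact ENNReal.mul_ne_top ENNReal.ofReal_ne_top hYfin.ne
    rwa [ENNReal.toReal_mul, ENNReal.toReal_ofReal hα₀pos.le] at h1
  have hα₀V : α₀ * V ≤ b / 8 := by
    have h1 : α₀ ≤ b / (8 * V) := min_le_right _ _
    have h2 : α₀ * V ≤ (b / (8 * V)) * V := by nlinarith
    calc α₀ * V ≤ (b / (8 * V)) * V := h2
      _ = b / 8 := by field_simp
  have hsplit : b ≤ (ν (B M ∩ Y')).toReal + (ν (Y \ B M)).toReal := by
    have h0 : Y' ⊆ (B M ∩ Y') ∪ (Y \ B M) := by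
      intro x hx
      by_cases h : x ∈ B M
      · exact Or.inl ⟨h, hx⟩
      · exact Or.inr ⟨hY'sub hx, h⟩
    have h1 : ν Y' ≤ ν (B M ∩ Y') + ν (Y \ B M) :=
      (measure_mono h0).trans (measure_union_le _ _)
    have hf1 : ν (B M ∩ Y') ≠ ⊤ := (lt_of_le_of_lt (measure_mono Set.inter_subset_right) hY'fin).ne
    have hf2 : ν (Y \ B M) ≠ ⊤ := (lt_of_le_of_lt (measure_mono Set.diff_subset) hYfin).ne
    have h2 := ENNReal.toReal_mono (ENNReal.add_ne_top.mpr ⟨hf1, hf2⟩) h1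
    rwa [ENNReal.toReal_add hf1 hf2] at h2
  have haR : (ν A).toReal ≤ b / 2 := by
    have h1 := ENNReal.toReal_mono (ENNReal.div_lt_top hY'fin.ne (by norm_num)).ne hAhigh
    rwa [ENNReal.toReal_div, ENNReal.toReal_ofNat] at h1
  rw [← ENNReal.toReal_lt_toReal
      (ENNReal.mul_ne_top (ENNReal.add_ne_top.mpr ⟨ENNReal.one_ne_top, ENNReal.ofReal_ne_top⟩) hAfin.ne)
      (lt_of_le_of_lt hRfin hY'fin).ne]
  rw [ENNReal.toReal_mul, ENNReal.toReal_add ENNReal.one_ne_top ENNReal.ofReal_ne_top,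
      ENNReal.toReal_one, ENNReal.toReal_ofReal (by norm_num)]
  have hRge : (ν (B M ∩ Y')).toReal ≤ (ν (finSMul (S^M) A ∩ Y')).toReal := by
    refine ENNReal.toReal_mono (lt_of_le_of_lt hRfin hY'fin).ne ?_
    exact measure_mono (Set.inter_subset_inter_left _ (hBpow M))
  linarith
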